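/- For every element f of PL_2(ℝ) there exist dyadic subdivisions D and R of ℝ and an order-preserving bijection between their intervals such that f maps each interval of D affinely (linearly) onto the corresponding interval of R. -/

import Mathlib

/-- A real number is dyadic rational if it has the form `k / 2 ^ n`. -/
def IsDyadic (t : ℝ) : Prop := ∃ (k : ℤ) (n : ℕ), t = (k : ℝ) / 2 ^ n

/-- An (orientation-preserving, i.e. order-preserving) homeomorphism of `ℝ`
belongs to `PL₂(ℝ)` if it has finitely many breakpoints `t₀ < t₁ < ⋯ < tₘ`,
each with dyadic rational coordinates, it is affine with slope an integer
power of `2` on each piece `[tᵢ, tᵢ₊₁]`, and there are integers `a`, `b` with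
`f(s) = s - a` for `s ≤ t₀` and `f(s) = s - b` for `s ≥ tₘ`. -/
def IsPL2R (f : ℝ ≃o ℝ) : Prop :=
  ∃ (m : ℕ) (t : Fin (m + 1) → ℝ) (z : Fin m → ℤ) (a b : ℤ),
    StrictMono t ∧ (∀ i, IsDyadic (t i) ∧ IsDyadic (f (t i))) ∧
    (∀ s : ℝ, s ≤ t 0 → f s = s - a) ∧
    (∀ s : ℝ, t (Fin.last m) ≤ s → f s = s - b) ∧
    (∀ (i : Fin m), ∀ s ∈ Set.Icc (t i.castSucc) (t i.succ),
      f s = f (t i.castSucc) + (2 : ℝ) ^ (z i) * (s - t i.castSucc))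

private lemma dyadic_scale (k : ℤ) (e n : ℕ) (h : e ≤ n) :
    (k : ℝ) / 2 ^ e = ((k * 2 ^ (n - e) : ℤ) : ℝ) / 2 ^ n := by
  have h2 : (2:ℝ) ^ n = 2 ^ e * 2 ^ (n - e) := by
    rw [← pow_add]; congr 1; omega
  push_cast
  rw [h2, div_eq_div_iff (by positivity) (by positivity)]
  ring

private lemma dyadic_trichotomy {m : ℕ} (c : Fin (m+1) → ℤ) (x : ℤ) :
    x + 1 ≤ c 0 ∨ c (Fin.last m) ≤ x ∨
      ∃ i : Fin m, c i.castSucc ≤ x ∧ x + 1 ≤ c i.succ := by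
  by_cases h0 : x + 1 ≤ c 0
  · exact Or.inl h0
  by_cases hl : c (Fin.last m) ≤ x
  · exact Or.inr (Or.inl hl)
  right; right
  push_neg at h0 hl
  have h0' : c 0 ≤ x := by omega
  set S := Finset.univ.filter (fun i : Fin (m+1) => c i ≤ x) with hS
  have hne : S.Nonempty := ⟨0, by simp [hS, h0']⟩
  set i0 := S.max' hne with hi0def
  have hi0 : c i0 ≤ x := by
    have := S.max'_mem hne
    simp [hS] at this; exact this
  have hne_last : i0 ≠ Fin.last m := by
    intro h; rw [h] at hi0; omega
  obtain ⟨j, hj⟩ := Fin.exists_castSucc_eq.mpr hne_last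
  refine ⟨j, by rw [hj]; exact hi0, ?_⟩
  by_contra hcon
  push_neg at hcon
  have hmem : j.succ ∈ S := by simp [hS]; omega
  have := S.le_max' _ hmem
  rw [← hi0def, ← hj] at this
  exact absurd (lt_of_le_of_lt this (Fin.castSucc_lt_succ : j.castSucc < j.succ)) (lt_irrefl _)

/-- For every `f ∈ PL₂(ℝ)` there exist dyadic subdivisions `D`, `R` of `ℝ`
(partitions of `ℝ` into standard dyadic intervals `[k/2ⁿ, (k+1)/2ⁿ]`, all but
finitely many of which are unit intervals `[j, j+1]` with `j ∈ ℤ`), indexed by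
`ℤ` in increasing order, such that `f` maps the `j`-th interval of `D`
affinely onto the `j`-th interval of `R` (this indexing realizes an
order-preserving bijection between the intervals). -/
theorem pl2R_exists_dyadic_subdivisions (f : ℝ ≃o ℝ) (hf : IsPL2R f) :
    ∃ t r : ℤ → ℝ,
      StrictMono t ∧ StrictMono r ∧
      Filter.Tendsto t Filter.atTop Filter.atTop ∧
      Filter.Tendsto t Filter.atBot Filter.atBot ∧
      Filter.Tendsto r Filter.atTop Filter.atTop ∧
      Filter.Tendsto r Filter.atBot Filter.atBot ∧
      (∀ j : ℤ, ∃ (k : ℤ) (n : ℕ),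
        t j = (k : ℝ) / 2 ^ n ∧ t (j + 1) = ((k : ℝ) + 1) / 2 ^ n) ∧
      (∀ j : ℤ, ∃ (k : ℤ) (n : ℕ),
        r j = (k : ℝ) / 2 ^ n ∧ r (j + 1) = ((k : ℝ) + 1) / 2 ^ n) ∧
      {j : ℤ | ¬ ∃ k : ℤ, t j = (k : ℝ) ∧ t (j + 1) = (k : ℝ) + 1}.Finite ∧
      {j : ℤ | ¬ ∃ k : ℤ, r j = (k : ℝ) ∧ r (j + 1) = (k : ℝ) + 1}.Finite ∧
      (∀ j : ℤ, f (t j) = r j ∧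
        ∀ s ∈ Set.Icc (t j) (t (j + 1)),
          f s = r j + ((r (j + 1) - r j) / (t (j + 1) - t j)) * (s - t j)) := by
  obtain ⟨m, tb, z, a, b, htb, hdy, hleft, hright, haffp⟩ := hf
  choose k1 e1 hk1 using fun i => (hdy i).1
  choose k2 e2 hk2 using fun i => (hdy i).2
  set N0 : ℕ := Finset.univ.sup (fun i : Fin (m+1) => max (e1 i) (e2 i)) with hN0def
  set Z : ℕ := Finset.univ.sup (fun i : Fin m => (z i).toNat) with hZdef
  set n : ℕ := N0 + Z with hndef
  have hN0 : ∀ i, e1 i ≤ N0 ∧ e2 i ≤ N0 := by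
    intro i
    have h := Finset.le_sup (f := fun i : Fin (m+1) => max (e1 i) (e2 i))
      (Finset.mem_univ i)
    rw [← hN0def] at h
    exact ⟨le_trans (le_max_left _ _) h, le_trans (le_max_right _ _) h⟩
  have hzZ : ∀ i : Fin m, z i ≤ (Z : ℤ) := fun i => by
    have h1 : z i ≤ ((z i).toNat : ℤ) := Int.self_le_toNat _
    have h2 : (z i).toNat ≤ Z := by
      have h := Finset.le_sup (f := fun i : Fin m => (z i).toNat) (Finset.mem_univ i)
      rw [← hZdef] at h; exact h
    omega
  set C : Fin (m+1) → ℤ := fun i => k1 i * 2 ^ (n - e1 i) with hCdef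
  have hC : ∀ i, tb i = (C i : ℝ) / 2 ^ n := fun i => by
    rw [hk1 i]; exact dyadic_scale _ _ _ (le_trans (hN0 i).1 (Nat.le_add_right _ _))
  set w : Fin m → ℕ := fun i => ((n : ℤ) - z i).toNat with hwdef
  have hw : ∀ i, (w i : ℤ) = (n : ℤ) - z i := fun i => by
    have h1 := hzZ i; simp only [hwdef]; omega
  have hwN0 : ∀ i, N0 ≤ w i := fun i => by
    have h1 := hw i; have h2 := hzZ i; omega
  set d : Fin m → ℤ := fun i => k2 i.castSucc * 2 ^ (w i - e2 i.castSucc) with hddef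
  have hd : ∀ i, f (tb i.castSucc) = (d i : ℝ) / 2 ^ (w i) := fun i => by
    rw [hk2 i.castSucc]
    exact dyadic_scale _ _ _ (le_trans (hN0 i.castSucc).2 (hwN0 i))
  have h2n : (0:ℝ) < 2 ^ n := by positivity
  have hdivle : ∀ p q : ℤ, p ≤ q → (p : ℝ) / 2 ^ n ≤ (q : ℝ) / 2 ^ n := by
    intro p q h
    have h' : (p:ℝ) ≤ q := by exact_mod_cast h
    gcongr
  have hdivlt : ∀ p q : ℤ, p < q → (p : ℝ) / 2 ^ n < (q : ℝ) / 2 ^ n := by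
    intro p q h
    apply div_lt_div_of_pos_right _ h2n
    exact_mod_cast h
  have hpow : ∀ i : Fin m, (2:ℝ) ^ (z i) * ((2:ℝ) ^ n)⁻¹ = ((2:ℝ) ^ (w i))⁻¹ := by
    intro i
    have h2 : (2:ℝ) ≠ 0 := two_ne_zero
    rw [← zpow_natCast (2:ℝ) n, ← zpow_natCast (2:ℝ) (w i),
      ← zpow_neg, ← zpow_neg, ← zpow_add₀ h2]
    congr 1
    have := hw i; omega
  set N : ℤ := ⌊tb 0⌋ - 1 with hNdef
  set M : ℤ := ⌈tb (Fin.last m)⌉ + 1 with hMdef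
  have hN1 : (N : ℝ) + 1 ≤ tb 0 := by
    have := Int.floor_le (tb 0); push_cast [hNdef]; linarith
  have hM1 : tb (Fin.last m) ≤ (M : ℝ) - 1 := by
    have := Int.le_ceil (tb (Fin.last m)); push_cast [hMdef]; linarith
  have htb0l : tb 0 ≤ tb (Fin.last m) := htb.monotone (Fin.zero_le _)
  have hNM : N < M := by
    have h1 : (N:ℝ) + 1 ≤ (M:ℝ) - 1 := le_trans hN1 (le_trans htb0l hM1)
    have h2 : (N:ℝ) < (M:ℝ) := by linarith
    exact_mod_cast h2
  set L : ℤ := (M - N) * 2 ^ n with hLdef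
  have hL : 0 < L := by
    have h1 : (0:ℤ) < 2 ^ n := by positivity
    have h2 : 0 < M - N := by omega
    positivity
  set T : ℤ → ℝ := fun j =>
    if j < 0 then ((N + j : ℤ) : ℝ)
    else if j ≤ L then ((N * 2 ^ n + j : ℤ) : ℝ) / 2 ^ n
    else ((M + (j - L) : ℤ) : ℝ) with hTdef
  have hT_mid : ∀ j, 0 ≤ j → j ≤ L → T j = ((N * 2 ^ n + j : ℤ) : ℝ) / 2 ^ n := by
    intro j h1 h2
    simp only [hTdef, if_neg (by omega : ¬ j < 0), if_pos h2]
  have hT_le : ∀ j ≤ 0, T j = ((N + j : ℤ) : ℝ) := by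
    intro j hj
    rcases lt_or_eq_of_le hj with h | h
    · simp only [hTdef, if_pos h]
    · subst h
      rw [hT_mid 0 le_rfl (le_of_lt hL)]
      push_cast
      field_simp
      ring
  have hT_ge : ∀ j, L ≤ j → T j = ((M + (j - L) : ℤ) : ℝ) := by
    intro j hj
    rcases lt_or_eq_of_le hj with h | h
    · simp only [hTdef, if_neg (by omega : ¬ j < 0), if_neg (by omega : ¬ j ≤ L)]
    · subst h
      rw [hT_mid L (le_of_lt hL) le_rfl]
      push_cast [hLdef]
      field_simp
      ring
  set R : ℤ → ℝ := fun j => f (T j) with hRdef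
  have hR : ∀ j, R j = f (T j) := fun _ => rfl
  have hTle_tb0 : ∀ j ≤ 0, T j ≤ tb 0 := by
    intro j hj
    rw [hT_le j hj]
    have h1 : ((N + j : ℤ) : ℝ) ≤ (N : ℝ) := by exact_mod_cast by omega
    linarith
  have hTge_tbl : ∀ j, L ≤ j → tb (Fin.last m) ≤ T j := by
    intro j hj
    rw [hT_ge j hj]
    have h1 : ((M:ℤ) : ℝ) ≤ ((M + (j - L) : ℤ) : ℝ) := by exact_mod_cast by omega
    linarith
  have hR_le : ∀ j ≤ 0, R j = ((N - a + j : ℤ) : ℝ) := by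
    intro j hj
    rw [hR, hleft _ (hTle_tb0 j hj), hT_le j hj]
    push_cast; ring
  have hR_ge : ∀ j, L ≤ j → R j = ((M - b + (j - L) : ℤ) : ℝ) := by
    intro j hj
    rw [hR, hright _ (hTge_tbl j hj), hT_ge j hj]
    push_cast; ring
  have hTmono : StrictMono T := by
    apply strictMono_int_of_lt_succ
    intro j
    rcases lt_or_ge j 0 with h | h
    · rw [hT_le j (by omega), hT_le (j+1) (by omega)]
      exact_mod_cast by omega
    rcases lt_or_ge j L with h2 | h2
    · rw [hT_mid j h (by omega), hT_mid (j+1) (by omega) (by omega)]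
      exact hdivlt _ _ (by omega)
    · rw [hT_ge j h2, hT_ge (j+1) (by omega)]
      exact_mod_cast by omega
  have hRmono : StrictMono R := fun x y h => f.strictMono (hTmono h)
  have hT_top : Filter.Tendsto T Filter.atTop Filter.atTop := by
    rw [Filter.tendsto_atTop_atTop]
    intro bnd
    refine ⟨max L (L + ⌈bnd⌉ - M), fun j hj => ?_⟩
    rw [hT_ge j (le_trans (le_max_left _ _) hj)]
    have h1 : ⌈bnd⌉ ≤ M + (j - L) := by
      have := le_trans (le_max_right _ _) hj; omega
    calc bnd ≤ (⌈bnd⌉ : ℝ) := Int.le_ceil bnd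
    _ ≤ _ := by exact_mod_cast h1
  have hT_bot : Filter.Tendsto T Filter.atBot Filter.atBot := by
    rw [Filter.tendsto_atBot_atBot]
    intro bnd
    refine ⟨min 0 (⌊bnd⌋ - N), fun j hj => ?_⟩
    rw [hT_le j (le_trans hj (min_le_left _ _))]
    have h1 : N + j ≤ ⌊bnd⌋ := by
      have := le_trans hj (min_le_right _ _); omega
    calc ((N + j : ℤ) : ℝ) ≤ (⌊bnd⌋ : ℝ) := by exact_mod_cast h1
    _ ≤ bnd := Int.floor_le bnd
  have hR_top : Filter.Tendsto R Filter.atTop Filter.atTop := by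
    rw [Filter.tendsto_atTop_atTop]
    intro bnd
    refine ⟨max L (L + ⌈bnd⌉ - M + b), fun j hj => ?_⟩
    rw [hR_ge j (le_trans (le_max_left _ _) hj)]
    have h1 : ⌈bnd⌉ ≤ M - b + (j - L) := by
      have := le_trans (le_max_right _ _) hj; omega
    calc bnd ≤ (⌈bnd⌉ : ℝ) := Int.le_ceil bnd
    _ ≤ _ := by exact_mod_cast h1
  have hR_bot : Filter.Tendsto R Filter.atBot Filter.atBot := by
    rw [Filter.tendsto_atBot_atBot]
    intro bnd
    refine ⟨min 0 (⌊bnd⌋ - N + a), fun j hj => ?_⟩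
    rw [hR_le j (le_trans hj (min_le_left _ _))]
    have h1 : N - a + j ≤ ⌊bnd⌋ := by
      have := le_trans hj (min_le_right _ _); omega
    calc ((N - a + j : ℤ) : ℝ) ≤ (⌊bnd⌋ : ℝ) := by exact_mod_cast h1
    _ ≤ bnd := Int.floor_le bnd
  have hTdy : ∀ j : ℤ, ∃ (k : ℤ) (n' : ℕ),
      T j = (k : ℝ) / 2 ^ n' ∧ T (j + 1) = ((k : ℝ) + 1) / 2 ^ n' := by
    intro j
    rcases lt_or_ge j 0 with h | h
    · refine ⟨N + j, 0, ?_, ?_⟩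
      · rw [hT_le j (by omega)]; norm_num
      · rw [hT_le (j+1) (by omega)]; push_cast; norm_num; ring
    rcases lt_or_ge j L with h2 | h2
    · refine ⟨N * 2 ^ n + j, n, ?_, ?_⟩
      · rw [hT_mid j h (by omega)]
      · rw [hT_mid (j+1) (by omega) (by omega)]; push_cast; ring
    · refine ⟨M + (j - L), 0, ?_, ?_⟩
      · rw [hT_ge j h2]; norm_num
      · rw [hT_ge (j+1) (by omega)]; push_cast; norm_num; ring
  have hCmono : Monotone C := by
    intro i i' h
    by_contra hcon
    push_neg at hcon
    have h1 := hdivlt _ _ hcon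
    rw [← hC, ← hC] at h1
    exact absurd (htb.monotone h) (not_le.mpr h1)
  have hkey : ∀ (i : Fin m) (y : ℤ), C i.castSucc ≤ y → y ≤ C i.succ →
      f ((y : ℝ) / 2 ^ n) = ((d i + y - C i.castSucc : ℤ) : ℝ) / 2 ^ (w i) := by
    intro i y hy1 hy2
    have hs1 : tb i.castSucc ≤ (y : ℝ) / 2 ^ n := by
      rw [hC i.castSucc]; exact hdivle _ _ hy1
    have hs2 : (y : ℝ) / 2 ^ n ≤ tb i.succ := by
      rw [hC i.succ]; exact hdivle _ _ hy2
    rw [haffp i ((y:ℝ)/2^n) ⟨hs1, hs2⟩, hd i, hC i.castSucc]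
    have heq : (2:ℝ) ^ (z i) * ((y:ℝ)/2^n - (C i.castSucc : ℝ)/2^n)
        = ((y:ℝ) - (C i.castSucc : ℝ)) * ((2:ℝ) ^ (w i))⁻¹ := by
      rw [← hpow i]; ring
    rw [heq, div_eq_mul_inv, div_eq_mul_inv]
    push_cast
    ring
  have hRdy : ∀ j : ℤ, ∃ (k : ℤ) (n' : ℕ),
      R j = (k : ℝ) / 2 ^ n' ∧ R (j + 1) = ((k : ℝ) + 1) / 2 ^ n' := by
    intro j
    rcases lt_or_ge j 0 with h | h
    · refine ⟨N - a + j, 0, ?_, ?_⟩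
      · rw [hR_le j (by omega)]; norm_num
      · rw [hR_le (j+1) (by omega)]; push_cast; norm_num; ring
    rcases lt_or_ge j L with h2 | h2
    · have hTj : T j = ((N * 2 ^ n + j : ℤ) : ℝ) / 2 ^ n := hT_mid j h (by omega)
      have hTj1 : T (j+1) = ((N * 2 ^ n + j + 1 : ℤ) : ℝ) / 2 ^ n := by
        rw [hT_mid (j+1) (by omega) (by omega)]; push_cast; ring
      rcases dyadic_trichotomy C (N * 2 ^ n + j) with h1 | h1 | ⟨i, hi1, hi2⟩
      · have hu1 : T (j+1) ≤ tb 0 := by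
          rw [hTj1, hC 0]; exact hdivle _ _ h1
        have hu0 : T j ≤ tb 0 := le_trans (le_of_lt (hTmono (lt_add_one j))) hu1
        refine ⟨N * 2 ^ n + j - a * 2 ^ n, n, ?_, ?_⟩
        · rw [hR, hleft _ hu0, hTj]
          push_cast
          field_simp
        · rw [hR, hleft _ hu1, hTj1]
          push_cast
          field_simp
          ring
      · have hu0 : tb (Fin.last m) ≤ T j := by
          rw [hTj, hC (Fin.last m)]; exact hdivle _ _ h1
        have hu1 : tb (Fin.last m) ≤ T (j+1) :=
          le_trans hu0 (le_of_lt (hTmono (lt_add_one j)))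
        refine ⟨N * 2 ^ n + j - b * 2 ^ n, n, ?_, ?_⟩
        · rw [hR, hright _ hu0, hTj]
          push_cast
          field_simp
        · rw [hR, hright _ hu1, hTj1]
          push_cast
          field_simp
          ring
      · refine ⟨d i + (N * 2 ^ n + j) - C i.castSucc, w i, ?_, ?_⟩
        · rw [hR, hTj]
          exact hkey i _ hi1 (by omega)
        · rw [hR, hTj1]
          rw [hkey i _ (by omega) hi2]
          push_cast
          ring
    · refine ⟨M - b + (j - L), 0, ?_, ?_⟩
      · rw [hR_ge j h2]; norm_num
      · rw [hR_ge (j+1) (by omega)]; push_cast; norm_num; ring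
  have hfinT : {j : ℤ | ¬ ∃ k : ℤ, T j = (k : ℝ) ∧ T (j + 1) = (k : ℝ) + 1}.Finite := by
    apply Set.Finite.subset (Set.finite_Icc 0 (L-1))
    intro j hj
    simp only [Set.mem_setOf_eq] at hj
    rw [Set.mem_Icc]
    by_contra hcon
    apply hj
    rcases (by omega : j < 0 ∨ L ≤ j) with h | h
    · exact ⟨N + j, hT_le j (by omega), by rw [hT_le (j+1) (by omega)]; push_cast; ring⟩
    · exact ⟨M + (j - L), hT_ge j h, by rw [hT_ge (j+1) (by omega)]; push_cast; ring⟩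
  have hfinR : {j : ℤ | ¬ ∃ k : ℤ, R j = (k : ℝ) ∧ R (j + 1) = (k : ℝ) + 1}.Finite := by
    apply Set.Finite.subset (Set.finite_Icc 0 (L-1))
    intro j hj
    simp only [Set.mem_setOf_eq] at hj
    rw [Set.mem_Icc]
    by_contra hcon
    apply hj
    rcases (by omega : j < 0 ∨ L ≤ j) with h | h
    · exact ⟨N - a + j, hR_le j (by omega), by rw [hR_le (j+1) (by omega)]; push_cast; ring⟩
    · exact ⟨M - b + (j - L), hR_ge j h, by rw [hR_ge (j+1) (by omega)]; push_cast; ring⟩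
  have haffσ : ∀ j : ℤ, ∃ σ : ℝ, ∀ s ∈ Set.Icc (T j) (T (j+1)),
      f s = f (T j) + σ * (s - T j) := by
    intro j
    rcases lt_or_ge j 0 with h | h
    · refine ⟨1, fun s hs => ?_⟩
      have hs0 : s ≤ tb 0 := le_trans hs.2 (hTle_tb0 (j+1) (by omega))
      rw [hleft s hs0, hleft _ (hTle_tb0 j (by omega))]; ring
    rcases lt_or_ge j L with h2 | h2
    · have hTj : T j = ((N * 2 ^ n + j : ℤ) : ℝ) / 2 ^ n := hT_mid j h (by omega)
      have hTj1 : T (j+1) = ((N * 2 ^ n + j + 1 : ℤ) : ℝ) / 2 ^ n := by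
        rw [hT_mid (j+1) (by omega) (by omega)]; push_cast; ring
      rcases dyadic_trichotomy C (N * 2 ^ n + j) with h1 | h1 | ⟨i, hi1, hi2⟩
      · refine ⟨1, fun s hs => ?_⟩
        have hu1 : T (j+1) ≤ tb 0 := by
          rw [hTj1, hC 0]; exact hdivle _ _ h1
        rw [hleft s (le_trans hs.2 hu1),
          hleft _ (le_trans (le_of_lt (hTmono (lt_add_one j))) hu1)]
        ring
      · refine ⟨1, fun s hs => ?_⟩
        have hu0 : tb (Fin.last m) ≤ T j := by
          rw [hTj, hC (Fin.last m)]; exact hdivle _ _ h1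
        rw [hright s (le_trans hu0 hs.1), hright _ hu0]; ring
      · refine ⟨2 ^ (z i), fun s hs => ?_⟩
        have hA : tb i.castSucc ≤ T j := by
          rw [hTj, hC i.castSucc]; exact hdivle _ _ hi1
        have hB : T (j+1) ≤ tb i.succ := by
          rw [hTj1, hC i.succ]; exact hdivle _ _ hi2
        have h1 := haffp i s ⟨le_trans hA hs.1, le_trans hs.2 hB⟩
        have h2 := haffp i (T j)
          ⟨hA, le_trans (le_of_lt (hTmono (lt_add_one j))) hB⟩
        rw [h1, h2]; ring
    · refine ⟨1, fun s hs => ?_⟩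
      have hu0 : tb (Fin.last m) ≤ T j := hTge_tbl j h2
      rw [hright s (le_trans hu0 hs.1), hright _ hu0]; ring
  refine ⟨T, R, hTmono, hRmono, hT_top, hT_bot, hR_top, hR_bot, hTdy, hRdy,
    hfinT, hfinR, ?_⟩
  intro j
  refine ⟨(hR j).symm, ?_⟩
  obtain ⟨σ, hσ⟩ := haffσ j
  intro s hs
  have hlt : T j < T (j+1) := hTmono (lt_add_one j)
  have hne : T (j+1) - T j ≠ 0 := sub_ne_zero.mpr (ne_of_gt hlt)
  have hend := hσ (T (j+1)) ⟨le_of_lt hlt, le_refl _⟩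
  have hslope : (R (j+1) - R j) / (T (j+1) - T j) = σ := by
    rw [hR, hR, hend]
    field_simp
    ring
  rw [hσ s hs, hslope, hR]
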